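/- Let S be a nondegenerate alternating bilinear form on 𝔪 and let 𝔰𝔭(S) = {A ∈ End(𝔪) : S(Ax,y) + S(x,Ay) = 0 for all x,y ∈ 𝔪}. Then the kernel of the Spencer map δ restricted to Hom(𝔪, 𝔰𝔭(S)) is isomorphic to S³(𝔪*): explicitly, the linear map sending p ∈ Hom(𝔪,𝔰𝔭(S)) with δ(p) = 0 to the trilinear form (x,y,z) ↦ S(p(x)y, z) is a linear isomorphism from ker(δ) ∩ Hom(𝔪,𝔰𝔭(S)) onto the space of fully symmetric trilinear forms on 𝔪. -/
import Mathlib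


noncomputable section

/-- The endomorphisms of `𝔪` infinitesimally preserving a bilinear form `S`,
i.e. the Lie algebra `𝔰𝔭(S)` when `S` is a nondegenerate alternating form. -/
def spSet {m : Type*} [AddCommGroup m] [Module ℝ m]
    (S : m →ₗ[ℝ] m →ₗ[ℝ] ℝ) : Set (Module.End ℝ m) :=
  {A | ∀ x y, S (A x) y + S x (A y) = 0}

/-- For a nondegenerate alternating bilinear form `S` on `𝔪`,
the map sending `p ∈ ker(δ) ∩ Hom(𝔪, 𝔰𝔭(S))` to the trilinear form
`(x,y,z) ↦ S(p(x)y, z)` is a linear isomorphism onto the space of fully symmetric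
trilinear forms on `𝔪` (so `ker δ ≅ S³(𝔪*)`): it takes values in the symmetric
forms, and every fully symmetric trilinear form has a unique preimage. -/
theorem spencer_kernel_sp_iso_sym3
    {m : Type*} [AddCommGroup m] [Module ℝ m] [FiniteDimensional ℝ m]
    (S : m →ₗ[ℝ] m →ₗ[ℝ] ℝ)
    (halt : ∀ x, S x x = 0)
    (hnondeg : ∀ x, (∀ y, S x y = 0) → x = 0) :
    (∀ p : m →ₗ[ℝ] Module.End ℝ m,
      (∀ x, p x ∈ spSet S) → (∀ x y, p x y = p y x) →
      (∀ x y z, S (p x y) z = S (p y x) z ∧ S (p x y) z = S (p x z) y)) ∧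
    (∀ C : m →ₗ[ℝ] m →ₗ[ℝ] m →ₗ[ℝ] ℝ,
      (∀ x y z, C x y z = C y x z) → (∀ x y z, C x y z = C x z y) →
      ∃! p : m →ₗ[ℝ] Module.End ℝ m,
        (∀ x, p x ∈ spSet S) ∧ (∀ x y, p x y = p y x) ∧
        (∀ x y z, S (p x y) z = C x y z)) := by
  -- antisymmetry of S
  have hskew : ∀ x y, S x y = - S y x := by
    intro x y
    have h := halt (x + y)
    simp only [map_add, LinearMap.add_apply, halt] at h
    linarith
  constructor
  · intro p hsp hsym x y z
    refine ⟨by rw [hsym x y], ?_⟩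
    have h1 := hsp x y z
    rw [hskew y (p x z)] at h1
    linarith
  · intro C hC1 hC2
    have hinj : Function.Injective S := by
      rw [injective_iff_map_eq_zero]
      intro x hx
      exact hnondeg x fun y => by rw [hx]; rfl
    set e : m ≃ₗ[ℝ] (m →ₗ[ℝ] ℝ) :=
      S.linearEquivOfInjective hinj Subspace.dual_finrank_eq.symm with he0
    have he : ∀ v, S v = e v := fun v => by
      rw [he0]
      exact (S.linearEquivOfInjective_apply hinj Subspace.dual_finrank_eq.symm v).symm
    -- define p
    set p : m →ₗ[ℝ] Module.End ℝ m :=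
      { toFun := fun x => e.symm.toLinearMap ∘ₗ C x
        map_add' := by intro a b; ext z; simp
        map_smul' := by intro c a; ext z; simp } with hp
    have hpval : ∀ x y z, S (p x y) z = C x y z := by
      intro x y z
      have : p x y = e.symm (C x y) := rfl
      rw [this, he]
      simp
    refine ⟨p, ⟨?_, ?_, hpval⟩, ?_⟩
    · intro x y z
      rw [hpval, hskew y (p x z), hpval]
      rw [hC2 x y z]
      ring
    · intro x y
      apply hinj
      ext z
      rw [hpval, hpval, hC1]
    · intro q ⟨hq1, hq2, hq3⟩
      ext x y
      apply hinj
      ext z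
      rw [hpval, hq3]

end
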